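/- Let Φ : [0,∞) → [0,∞) be nondecreasing and convex and set H(t) = log Φ(t). Then the condition ∫_{δ*}^∞ dτ / (τ Φ^{-1}(τ)) = ∞ for some δ* > Φ(0) is equivalent to the condition ∫_δ^∞ H(t) dt / t² = ∞ for some (equivalently, all) δ > t₀, where t₀ = sup{ t : Φ(t) = 0 } (t₀ = 0 if Φ(0) > 0). -/

import Mathlib

open MeasureTheory Filter Set
open scoped ENNReal Topology

/-- The generalized inverse `Φ⁻¹(τ) = inf { t : Φ(t) ≥ τ }`. -/
noncomputable def genInv (Φ : ℝ → ℝ) (τ : ℝ) : ℝ := sInf {t : ℝ | 0 ≤ t ∧ τ ≤ Φ t}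

lemma lint_inv_sq {a : ℝ} (ha : 0 < a) :
    ∫⁻ t in Ioi a, ENNReal.ofReal (1 / t ^ 2) = ENNReal.ofReal (1 / a) := by
  have hint : IntegrableOn (fun t : ℝ => t ^ (-2 : ℝ)) (Ioi a) := integrableOn_Ioi_rpow_of_lt (by norm_num) ha
  have hcong : ∀ t ∈ Ioi a, t ^ (-2 : ℝ) = 1 / t ^ 2 := by
    intro t ht
    have ht0 : 0 < t := lt_trans ha ht
    rw [Real.rpow_neg ht0.le, one_div]
    norm_cast
  have hint2 : IntegrableOn (fun t : ℝ => 1 / t ^ 2) (Ioi a) :=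
    hint.congr_fun hcong measurableSet_Ioi
  rw [← ofReal_integral_eq_lintegral_ofReal hint2
    ((ae_restrict_iff' measurableSet_Ioi).2 (ae_of_all _ (fun t ht => by positivity)))]
  congr 1
  rw [setIntegral_congr_fun measurableSet_Ioi (fun t ht => (hcong t ht).symm),
    integral_Ioi_rpow_of_lt (by norm_num) ha]
  norm_num
  exact Real.rpow_neg_one a

lemma lint_inv {a b : ℝ} (ha : 0 < a) (hab : a ≤ b) :
    ∫⁻ τ in Ioc a b, ENNReal.ofReal (1 / τ) = ENNReal.ofReal (Real.log b - Real.log a) := by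
  have hb : 0 < b := lt_of_lt_of_le ha hab
  have hcont : ContinuousOn (fun τ : ℝ => 1 / τ) (Icc a b) := by
    apply ContinuousOn.div continuousOn_const continuousOn_id
    intro x hx; exact ne_of_gt (lt_of_lt_of_le ha hx.1)
  have hint : IntegrableOn (fun τ : ℝ => 1 / τ) (Ioc a b) :=
    (hcont.integrableOn_Icc).mono_set Ioc_subset_Icc_self
  rw [← ofReal_integral_eq_lintegral_ofReal hint
    ((ae_restrict_iff' measurableSet_Ioc).2 (ae_of_all _ (fun τ hτ => by
      have : 0 < τ := lt_of_lt_of_le ha hτ.1.le; positivity)))]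
  congr 1
  rw [← intervalIntegral.integral_of_le hab, integral_one_div (by
    intro h; rw [Set.mem_uIcc] at h; rcases h with ⟨h1,_⟩|⟨_,h2⟩ <;> linarith),
    Real.log_div (ne_of_gt hb) (ne_of_gt ha)]

lemma tail_top_iff {f : ℝ → ℝ≥0∞} {a b : ℝ} (hab : a ≤ b)
    (hfin : ∫⁻ x in Ioc a b, f x ≠ ⊤) :
    (∫⁻ x in Ioi a, f x = ⊤ ↔ ∫⁻ x in Ioi b, f x = ⊤) := by
  have hsplit : Ioi a = Ioc a b ∪ Ioi b := (Ioc_union_Ioi_eq_Ioi hab).symm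
  rw [hsplit, lintegral_union measurableSet_Ioi (Ioc_disjoint_Ioi le_rfl)]
  constructor
  · intro h
    by_contra hb
    exact (ENNReal.add_ne_top.2 ⟨hfin, hb⟩) h
  · intro h; simp [h]

lemma bounded_lintegral_ne_top {f : ℝ → ℝ≥0∞} {a b : ℝ} {C : ℝ≥0∞} (hC : C ≠ ⊤)
    (hbd : ∀ x ∈ Ioc a b, f x ≤ C) :
    ∫⁻ x in Ioc a b, f x ≠ ⊤ := by
  have : ∫⁻ x in Ioc a b, f x ≤ C * volume (Ioc a b) := by
    calc ∫⁻ x in Ioc a b, f x ≤ ∫⁻ _ in Ioc a b, C := setLIntegral_mono' measurableSet_Ioc hbd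
    _ = C * volume (Ioc a b) := by rw [setLIntegral_const]
  exact ne_top_of_le_ne_top (ENNReal.mul_ne_top hC (by simp [Real.volume_Ioc])) this

section GenInv
variable {Φ : ℝ → ℝ} (hmono : MonotoneOn Φ (Ici (0 : ℝ)))
  (htop : Tendsto Φ atTop atTop)
include hmono htop

omit hmono in
lemma genInv_set_nonempty (τ : ℝ) : {t : ℝ | 0 ≤ t ∧ τ ≤ Φ t}.Nonempty := by
  obtain ⟨T, hT⟩ := (tendsto_atTop.1 htop τ).exists_forall_of_atTop
  exact ⟨max T 0, le_max_right _ _, hT _ (le_max_left _ _)⟩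

omit hmono htop in
lemma genInv_bddBelow (τ : ℝ) : BddBelow {t : ℝ | 0 ≤ t ∧ τ ≤ Φ t} :=
  ⟨0, fun t ht => ht.1⟩

omit hmono in
lemma genInv_nonneg (τ : ℝ) : 0 ≤ genInv Φ τ :=
  le_csInf (genInv_set_nonempty htop τ) (fun t ht => ht.1)

lemma le_genInv {T τ : ℝ} (hT : 0 ≤ T) (h : Φ T < τ) : T ≤ genInv Φ τ := by
  apply le_csInf (genInv_set_nonempty htop τ)
  intro t ht
  by_contra hlt
  push_neg at hlt
  exact absurd (ht.2.trans (hmono ht.1 hT hlt.le)) (not_le.2 h)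

omit hmono htop in
lemma genInv_le {t τ : ℝ} (ht : 0 ≤ t) (h : τ ≤ Φ t) : genInv Φ τ ≤ t :=
  csInf_le (genInv_bddBelow τ) ⟨ht, h⟩

lemma le_phi_of_genInv_lt {t τ : ℝ} (h : genInv Φ τ < t) : τ ≤ Φ t := by
  obtain ⟨s, hs, hst⟩ := exists_lt_of_csInf_lt (genInv_set_nonempty htop τ) h
  exact hs.2.trans (hmono hs.1 (hs.1.trans hst.le) hst.le)

lemma genInv_lower (hconv : ConvexOn ℝ (Ici (0 : ℝ)) Φ) {τ : ℝ} (hτ : Φ 0 < τ) :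
    min 1 ((τ - Φ 0) / (Φ 1 - Φ 0 + 1)) ≤ genInv Φ τ := by
  set C := Φ 1 - Φ 0 + 1 with hC
  have hΦ01 : Φ 0 ≤ Φ 1 := hmono self_mem_Ici (mem_Ici.2 zero_le_one) zero_le_one
  have hCpos : 0 < C := by simp only [hC]; linarith
  set m := min 1 ((τ - Φ 0) / C) with hm
  have hmpos : 0 < m := lt_min one_pos (div_pos (by linarith) hCpos)
  by_contra hlt
  push_neg at hlt
  obtain ⟨s, hs, hsm⟩ := exists_lt_of_csInf_lt (genInv_set_nonempty htop τ) hlt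
  have hs1 : s < 1 := lt_of_lt_of_le hsm (min_le_left _ _)
  have hs0 : 0 ≤ s := hs.1
  have hconvs : Φ s ≤ (1 - s) * Φ 0 + s * Φ 1 := by
    have := hconv.2 (self_mem_Ici) (mem_Ici.2 zero_le_one)
      (by linarith : (0:ℝ) ≤ 1 - s) hs0 (by ring)
    simpa using this
  have hmC : m * C ≤ τ - Φ 0 := by
    have : m ≤ (τ - Φ 0) / C := min_le_right _ _
    calc m * C ≤ ((τ - Φ 0) / C) * C := by nlinarith
    _ = τ - Φ 0 := div_mul_cancel₀ _ (ne_of_gt hCpos)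
  have : τ ≤ Φ s := hs.2
  nlinarith [hconvs]

lemma tau_tail_le (hconv : ConvexOn ℝ (Ici (0 : ℝ)) Φ) (h0 : 0 ≤ Φ 0)
    {a b : ℝ} (ha : Φ 0 < a) (hab : a ≤ b) :
    (∫⁻ τ in Ioi a, ENNReal.ofReal (1 / (τ * genInv Φ τ)) = ⊤ ↔
      ∫⁻ τ in Ioi b, ENNReal.ofReal (1 / (τ * genInv Φ τ)) = ⊤) := by
  have hC : 0 < Φ 1 - Φ 0 + 1 := by
    have := hmono self_mem_Ici (mem_Ici.2 zero_le_one) zero_le_one; linarith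
  set m := min 1 ((a - Φ 0) / (Φ 1 - Φ 0 + 1)) with hm
  have hmpos : 0 < m := lt_min one_pos (div_pos (by linarith) hC)
  have hapos : 0 < a := lt_of_le_of_lt h0 ha
  apply tail_top_iff hab
  apply bounded_lintegral_ne_top (C := ENNReal.ofReal (1 / (a * m))) ENNReal.ofReal_ne_top
  intro τ hτ
  have hτa : a ≤ τ := hτ.1.le
  have hg : m ≤ genInv Φ τ := by
    refine le_trans ?_ (genInv_lower hmono htop hconv (lt_of_lt_of_le ha hτa))
    exact min_le_min le_rfl ((div_le_div_iff_of_pos_right hC).2 (by linarith))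
  have h1 : a * m ≤ τ * genInv Φ τ :=
    mul_le_mul hτa hg hmpos.le (le_trans hapos.le hτa)
  exact ENNReal.ofReal_le_ofReal (one_div_le_one_div_of_le (by positivity) h1)

lemma log_tail_le (hnonneg : ∀ t ≥ (0 : ℝ), 0 ≤ Φ t) {a b : ℝ} (ha : 0 < a) (hab : a ≤ b) :
    (∫⁻ t in Ioi a, ENNReal.ofReal (Real.log (Φ t) / t ^ 2) = ⊤ ↔
      ∫⁻ t in Ioi b, ENNReal.ofReal (Real.log (Φ t) / t ^ 2) = ⊤) := by
  apply tail_top_iff hab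
  apply bounded_lintegral_ne_top
    (C := ENNReal.ofReal (max 0 (Real.log (Φ b)) / a ^ 2)) ENNReal.ofReal_ne_top
  intro t ht
  have ht0 : 0 < t := lt_of_lt_of_le ha ht.1.le
  have hΦtb : Φ t ≤ Φ b := hmono (mem_Ici.2 ht0.le) (mem_Ici.2 (ht0.le.trans ht.2)) ht.2
  have hlog : Real.log (Φ t) ≤ max 0 (Real.log (Φ b)) := by
    rcases le_or_gt (Φ t) 0 with h | h
    · have : Φ t = 0 := le_antisymm h (hnonneg t ht0.le)
      simp [this]
    · exact le_max_of_le_right (Real.log_le_log h hΦtb)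
  apply ENNReal.ofReal_le_ofReal
  rcases le_or_gt (Real.log (Φ t)) 0 with h | h
  · exact le_trans (div_nonpos_of_nonpos_of_nonneg h (by positivity)) (by positivity)
  · apply div_le_div₀ (by positivity) hlog (by positivity)
    exact pow_le_pow_left₀ ha.le ht.1.le 2

lemma core_identity {T : ℝ} (hT1 : 1 ≤ T) (hΦT : 1 ≤ Φ T) :
    ∫⁻ τ in Ioi (Φ T), ENNReal.ofReal (1 / (τ * genInv Φ τ)) =
      ∫⁻ t in Ioi T, ENNReal.ofReal ((Real.log (Φ t) - Real.log (Φ T)) / t ^ 2) := by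
  set M := Φ T with hM
  have hM0 : 0 < M := lt_of_lt_of_le one_pos hΦT
  have hT0 : 0 < T := lt_of_lt_of_le one_pos hT1
  set Ψ : ℝ → ℝ := fun t => Φ (max t 0) with hΨ
  have hΨmono : Monotone Ψ := fun x y h =>
    hmono (mem_Ici.2 (le_max_right _ _)) (mem_Ici.2 (le_max_right _ _))
      (max_le_max h le_rfl)
  have hΨeq : ∀ t : ℝ, 0 ≤ t → Ψ t = Φ t := fun t ht => by
    simp [hΨ, max_eq_left ht]
  set f : ℝ → ℝ → ℝ≥0∞ := fun t τ =>
    if τ ≤ Ψ t then ENNReal.ofReal (1 / (τ * t ^ 2)) else 0 with hf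
  have hfm : Measurable (Function.uncurry f) := by
    apply Measurable.ite
    · exact measurableSet_le measurable_snd (hΨmono.measurable.comp measurable_fst)
    · exact Measurable.ennreal_ofReal
        (measurable_const.div (measurable_snd.mul (measurable_fst.pow_const 2)))
    · exact measurable_const
  have hmeas_invsq : Measurable (fun t : ℝ => ENNReal.ofReal (1 / t ^ 2)) := by
    exact Measurable.ennreal_ofReal (measurable_const.div (measurable_id.pow_const 2))
  have hmeas_inv : Measurable (fun τ : ℝ => ENNReal.ofReal (1 / τ)) := by
    exact Measurable.ennreal_ofReal (measurable_const.div measurable_id)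
  have hswap := MeasureTheory.lintegral_lintegral_swap
    (μ := volume.restrict (Ioi T)) (ν := volume.restrict (Ioi M)) hfm.aemeasurable
  -- left iterated integral
  have hleft : ∫⁻ t in Ioi T, ∫⁻ τ in Ioi M, f t τ =
      ∫⁻ t in Ioi T, ENNReal.ofReal ((Real.log (Φ t) - Real.log M) / t ^ 2) := by
    apply setLIntegral_congr_fun measurableSet_Ioi
    intro t ht
    have ht0 : 0 < t := lt_trans hT0 ht
    have hMt : M ≤ Φ t := hmono (mem_Ici.2 hT0.le) (mem_Ici.2 ht0.le) ht.le
    have hind : ∀ τ ∈ Ioi M, f t τ =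
        (Ioc M (Φ t)).indicator (fun τ => ENNReal.ofReal (1 / (τ * t ^ 2))) τ := by
      intro τ hτ
      by_cases h : τ ≤ Φ t
      · simp only [hf, hΨeq t ht0.le]
        rw [if_pos h, indicator_of_mem (mem_Ioc.mpr ⟨mem_Ioi.1 hτ, h⟩)]
      · simp only [hf, hΨeq t ht0.le]
        rw [if_neg h, indicator_of_notMem (fun hc => h (mem_Ioc.1 hc).2)]
    beta_reduce
    rw [setLIntegral_congr_fun measurableSet_Ioi hind,
      lintegral_indicator measurableSet_Ioc, Measure.restrict_restrict measurableSet_Ioc,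
      Ioc_inter_Ioi, sup_of_le_left le_rfl]
    have hpt : ∀ τ : ℝ, ENNReal.ofReal (1 / (τ * t ^ 2)) =
        ENNReal.ofReal (1 / t ^ 2) * ENNReal.ofReal (1 / τ) := by
      intro τ
      rw [← ENNReal.ofReal_mul (by positivity)]
      congr 1; ring
    rw [lintegral_congr hpt, lintegral_const_mul _ hmeas_inv, lint_inv hM0 hMt,
      ← ENNReal.ofReal_mul (by positivity)]
    congr 1; ring
  -- right iterated integral
  have hright : ∫⁻ τ in Ioi M, ∫⁻ t in Ioi T, f t τ =
      ∫⁻ τ in Ioi M, ENNReal.ofReal (1 / (τ * genInv Φ τ)) := by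
    apply setLIntegral_congr_fun measurableSet_Ioi
    intro τ hτ
    have hτ0 : 0 < τ := lt_trans hM0 hτ
    set g := genInv Φ τ with hg
    have hTg : T ≤ g := le_genInv hmono htop hT0.le hτ
    have hg0 : 0 < g := lt_of_lt_of_le hT0 hTg
    have hae : ∀ t : ℝ, t ≠ g →
        (Ioi T).indicator (fun t => f t τ) t =
        (Ioi g).indicator (fun t => ENNReal.ofReal (1 / (τ * t ^ 2))) t := by
      intro t htg
      by_cases htT : t ∈ Ioi T
      · have ht0 : 0 < t := lt_trans hT0 htT
        rw [indicator_of_mem htT]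
        by_cases h : τ ≤ Ψ t
        · have hτΦ : τ ≤ Φ t := by rwa [hΨeq t ht0.le] at h
          have hgt : g < t := lt_of_le_of_ne (genInv_le ht0.le hτΦ) (Ne.symm htg)
          simp only [hf]
          rw [if_pos h, indicator_of_mem (mem_Ioi.2 hgt)]
        · have hng : ¬ g < t := by
            intro hc
            rw [hΨeq t ht0.le] at h
            exact h (le_phi_of_genInv_lt hmono htop hc)
          simp only [hf]
          rw [if_neg h, indicator_of_notMem (fun hc => hng (mem_Ioi.1 hc))]
      · rw [indicator_of_notMem htT]
        have hng : ¬ g < t := fun hc => htT (mem_Ioi.2 (lt_of_le_of_lt hTg hc))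
        rw [indicator_of_notMem (fun hc => hng (mem_Ioi.1 hc))]
    calc ∫⁻ t in Ioi T, f t τ
        = ∫⁻ t, (Ioi T).indicator (fun t => f t τ) t := by
          rw [lintegral_indicator measurableSet_Ioi]
      _ = ∫⁻ t, (Ioi g).indicator (fun t => ENNReal.ofReal (1 / (τ * t ^ 2))) t := by
          apply lintegral_congr_ae
          filter_upwards [compl_mem_ae_iff.2 (Real.volume_singleton (a := g))] with t ht
          exact hae t ht
      _ = ∫⁻ t in Ioi g, ENNReal.ofReal (1 / (τ * t ^ 2)) := by
          rw [lintegral_indicator measurableSet_Ioi]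
      _ = ENNReal.ofReal (1 / (τ * g)) := by
          have hpt : ∀ t : ℝ, ENNReal.ofReal (1 / (τ * t ^ 2)) =
              ENNReal.ofReal (1 / τ) * ENNReal.ofReal (1 / t ^ 2) := by
            intro t
            rw [← ENNReal.ofReal_mul (by positivity)]
            congr 1; ring
          rw [lintegral_congr hpt, lintegral_const_mul _ hmeas_invsq, lint_inv_sq hg0,
            ← ENNReal.ofReal_mul (by positivity)]
          congr 1; ring
  rw [← hright, ← hswap, hleft]

end GenInv

lemma shift_log {L : ℝ → ℝ} {T c : ℝ} (hT : 0 < T) (hc : 0 ≤ c) :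
    (∫⁻ t in Ioi T, ENNReal.ofReal ((L t - c) / t ^ 2) = ⊤) ↔
      (∫⁻ t in Ioi T, ENNReal.ofReal (L t / t ^ 2) = ⊤) := by
  have hmc : Measurable (fun t : ℝ => ENNReal.ofReal (c / t ^ 2)) :=
    Measurable.ennreal_ofReal (measurable_const.div (measurable_id'.pow_const 2))
  have hF : ∫⁻ t in Ioi T, ENNReal.ofReal (c / t ^ 2) ≠ ⊤ := by
    have hpt : ∀ t : ℝ, ENNReal.ofReal (c / t ^ 2) =
        ENNReal.ofReal c * ENNReal.ofReal (1 / t ^ 2) := by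
      intro t
      rw [← ENNReal.ofReal_mul hc]
      congr 1; ring
    calc ∫⁻ t in Ioi T, ENNReal.ofReal (c / t ^ 2)
        = ENNReal.ofReal c * ∫⁻ t in Ioi T, ENNReal.ofReal (1 / t ^ 2) := by
          rw [lintegral_congr hpt]
          exact lintegral_const_mul _
            (Measurable.ennreal_ofReal (measurable_const.div (measurable_id'.pow_const 2)))
      _ ≠ ⊤ := by
          rw [lint_inv_sq hT]
          exact ENNReal.mul_ne_top ENNReal.ofReal_ne_top ENNReal.ofReal_ne_top
  constructor
  · intro h
    have hmono' : ∫⁻ t in Ioi T, ENNReal.ofReal ((L t - c) / t ^ 2) ≤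
        ∫⁻ t in Ioi T, ENNReal.ofReal (L t / t ^ 2) := by
      apply setLIntegral_mono' measurableSet_Ioi
      intro t _
      exact ENNReal.ofReal_le_ofReal (div_le_div_of_nonneg_right (by linarith) (sq_nonneg t))
    exact top_le_iff.1 (h ▸ hmono')
  · intro h
    by_contra hY
    have hlt : ∫⁻ t in Ioi T, ENNReal.ofReal (L t / t ^ 2) < ⊤ := by
      calc ∫⁻ t in Ioi T, ENNReal.ofReal (L t / t ^ 2)
          ≤ ∫⁻ t in Ioi T, (ENNReal.ofReal ((L t - c) / t ^ 2) + ENNReal.ofReal (c / t ^ 2)) := by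
            apply setLIntegral_mono' measurableSet_Ioi
            intro t ht
            have ht0 : 0 < t := lt_trans hT ht
            rcases le_or_gt c (L t) with hcL | hcL
            · rw [← ENNReal.ofReal_add (div_nonneg (by linarith) (by positivity)) (by positivity)]
              apply ENNReal.ofReal_le_ofReal
              apply le_of_eq
              rw [← add_div]
              ring_nf
            · refine le_add_left (ENNReal.ofReal_le_ofReal ?_)
              exact div_le_div_of_nonneg_right (by linarith) (sq_nonneg t) |>.trans le_rfl
        _ = (∫⁻ t in Ioi T, ENNReal.ofReal ((L t - c) / t ^ 2)) +
              ∫⁻ t in Ioi T, ENNReal.ofReal (c / t ^ 2) := lintegral_add_right _ hmc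
        _ < ⊤ := lt_top_iff_ne_top.2 (ENNReal.add_ne_top.2 ⟨hY, hF⟩)
    exact absurd h (ne_of_lt hlt)

/-- For a nondecreasing convex `Φ : [0,∞) → [0,∞)` with `Φ(t) → ∞`, and `H = log Φ`,
the condition `∫_{δ*}^∞ dτ/(τ Φ⁻¹(τ)) = ∞` for some `δ* > Φ(0)` is equivalent to
`∫_δ^∞ H(t) dt/t² = ∞` for some (equivalently, all) `δ > t₀`,
where `t₀ = sup{t : Φ(t) = 0}` (equal to `0` when `Φ(0) > 0`). -/
theorem inverse_integral_iff_log_integral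
    (Φ : ℝ → ℝ) (hmono : MonotoneOn Φ (Ici (0 : ℝ)))
    (hconv : ConvexOn ℝ (Ici (0 : ℝ)) Φ)
    (hnonneg : ∀ t ≥ (0 : ℝ), 0 ≤ Φ t)
    (htop : Tendsto Φ atTop atTop)
    (t₀ : ℝ) (ht₀ : t₀ = sSup {t : ℝ | 0 ≤ t ∧ Φ t = 0}) :
    ((∃ δ₀ > Φ 0, ∫⁻ τ in Ioi δ₀, ENNReal.ofReal (1 / (τ * genInv Φ τ)) = ⊤) ↔
      (∀ δ > t₀, ∫⁻ t in Ioi δ, ENNReal.ofReal (Real.log (Φ t) / t ^ 2) = ⊤)) ∧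
    ((∃ δ > t₀, ∫⁻ t in Ioi δ, ENNReal.ofReal (Real.log (Φ t) / t ^ 2) = ⊤) ↔
      (∀ δ > t₀, ∫⁻ t in Ioi δ, ENNReal.ofReal (Real.log (Φ t) / t ^ 2) = ⊤)) := by
  have hΦ0 : 0 ≤ Φ 0 := hnonneg 0 le_rfl
  have ht₀0 : 0 ≤ t₀ := by
    rcases eq_empty_or_nonempty {t : ℝ | 0 ≤ t ∧ Φ t = 0} with he | hne
    · rw [ht₀, he, Real.sSup_empty]
    · obtain ⟨T₁, hT₁⟩ := (tendsto_atTop.1 htop 1).exists_forall_of_atTop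
      have hbdd : BddAbove {t : ℝ | 0 ≤ t ∧ Φ t = 0} := ⟨max T₁ 0, fun s hs => by
        by_contra hgt; push_neg at hgt
        have h1 : (1:ℝ) ≤ Φ s := hT₁ s (le_trans (le_max_left _ _) hgt.le)
        rw [hs.2] at h1; linarith⟩
      obtain ⟨s, hs⟩ := hne
      exact le_trans hs.1 (ht₀ ▸ le_csSup hbdd hs)
  obtain ⟨T₂, hT₂⟩ := (tendsto_atTop.1 htop (max 1 (Φ 0 + 1))).exists_forall_of_atTop
  set T := max T₂ (max (t₀ + 1) 1) with hT
  have hTt₀ : t₀ < T := lt_of_lt_of_le (lt_add_one t₀) ((le_max_left _ _).trans (le_max_right _ _))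
  have hT1 : 1 ≤ T := (le_max_right _ _).trans (le_max_right _ _)
  have hT0 : 0 < T := lt_of_lt_of_le one_pos hT1
  have hΦT1 : 1 ≤ Φ T := le_trans (le_max_left _ _) (hT₂ T (le_max_left _ _))
  have hΦTΦ0 : Φ 0 < Φ T :=
    lt_of_lt_of_le (lt_add_one _) (le_trans (le_max_right _ _) (hT₂ T (le_max_left _ _)))
  have hP : ∀ a, t₀ < a → ∀ b, t₀ < b →
      ((∫⁻ t in Ioi a, ENNReal.ofReal (Real.log (Φ t) / t ^ 2) = ⊤) ↔
       (∫⁻ t in Ioi b, ENNReal.ofReal (Real.log (Φ t) / t ^ 2) = ⊤)) := by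
    intro a ha b hb
    rcases le_total a b with h | h
    · exact log_tail_le hmono htop hnonneg (lt_of_le_of_lt ht₀0 ha) h
    · exact (log_tail_le hmono htop hnonneg (lt_of_le_of_lt ht₀0 hb) h).symm
  have hQ : ∀ a, Φ 0 < a → ∀ b, Φ 0 < b →
      ((∫⁻ τ in Ioi a, ENNReal.ofReal (1 / (τ * genInv Φ τ)) = ⊤) ↔
       (∫⁻ τ in Ioi b, ENNReal.ofReal (1 / (τ * genInv Φ τ)) = ⊤)) := by
    intro a ha b hb
    rcases le_total a b with h | h
    · exact tau_tail_le hmono htop hconv hΦ0 ha h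
    · exact (tau_tail_le hmono htop hconv hΦ0 hb h).symm
  have hkey : (∫⁻ τ in Ioi (Φ T), ENNReal.ofReal (1 / (τ * genInv Φ τ)) = ⊤) ↔
      (∫⁻ t in Ioi T, ENNReal.ofReal (Real.log (Φ t) / t ^ 2) = ⊤) := by
    rw [core_identity hmono htop hT1 hΦT1]
    exact shift_log hT0 (Real.log_nonneg hΦT1)
  refine ⟨⟨?_, ?_⟩, ⟨?_, ?_⟩⟩
  · rintro ⟨δ₀, hδ₀, hint⟩ δ hδ
    exact (hP T hTt₀ δ hδ).1 (hkey.1 ((hQ δ₀ hδ₀ (Φ T) hΦTΦ0).1 hint))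
  · intro h
    exact ⟨Φ T, hΦTΦ0, hkey.2 (h T hTt₀)⟩
  · rintro ⟨δ, hδ, hint⟩ δ' hδ'
    exact (hP δ hδ δ' hδ').1 hint
  · intro h
    exact ⟨t₀ + 1, lt_add_one t₀, h _ (lt_add_one t₀)⟩
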